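/- Let φ be a stability function on an abelian length category A and p an element of the totally ordered set P of phases. Then the full subcategory T_p = {M ∈ A : the maximally destabilizing quotient M' of M satisfies φ(M') ≥ p} (together with the zero object) is closed under quotients and extensions, i.e., T_p is a torsion class in A. -/

import Mathlib

open CategoryTheory CategoryTheory.Limits

universe u v

variable {C : Type u} [Category.{v} C] [Abelian C] {P : Type*} [LinearOrder P]

/-- The see-saw property for a stability function, on short exact sequences of nonzero objects. -/
def SeeSaw (φ : C → P) : Prop :=
  ∀ S : ShortComplex C, S.ShortExact →
    ¬ IsZero S.X₁ → ¬ IsZero S.X₂ → ¬ IsZero S.X₃ →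
    (φ S.X₁ < φ S.X₂ ∧ φ S.X₂ < φ S.X₃) ∨
    (φ S.X₃ < φ S.X₂ ∧ φ S.X₂ < φ S.X₁) ∨
    (φ S.X₁ = φ S.X₂ ∧ φ S.X₂ = φ S.X₃)

/-- A stability function is constant on isomorphism classes. -/
def IsoInvariant (φ : C → P) : Prop := ∀ ⦃M N : C⦄, (M ≅ N) → φ M = φ N

/-- `M` is φ-semistable: every nonzero proper subobject has phase ≤ φ M. -/
def Semistable (φ : C → P) (M : C) : Prop :=
  ∀ ⦃L : C⦄ (i : L ⟶ M), Mono i → ¬ IsZero L → ¬ IsIso i → φ L ≤ φ M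

/-- `M` is φ-stable: every nonzero proper subobject has phase < φ M. -/
def Stable (φ : C → P) (M : C) : Prop :=
  ∀ ⦃L : C⦄ (i : L ⟶ M), Mono i → ¬ IsZero L → ¬ IsIso i → φ L < φ M

/-- `(N, q)` is a maximally destabilizing quotient of `M`. -/
def IsMDQ (φ : C → P) {M N : C} (q : M ⟶ N) : Prop :=
  Epi q ∧ ¬ IsZero N ∧ φ N ≤ φ M ∧
    ∀ ⦃N' : C⦄ (q' : M ⟶ N'), Epi q' → ¬ IsZero N' →
      φ N ≤ φ N' ∧ (φ N' = φ N → ∃ f : N ⟶ N', q' = q ≫ f)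

/-- Membership in `T_p`: zero, or the maximally destabilizing quotient has phase `≥ p`. -/
def TpMDQ (φ : C → P) (p : P) (M : C) : Prop :=
  IsZero M ∨ ∃ (N : C) (q : M ⟶ N), IsMDQ φ q ∧ p ≤ φ N

private lemma isZero_of_epi' {X Y : C} (f : X ⟶ Y) (hf : Epi f) (h : IsZero X) : IsZero Y := by
  haveI := hf
  exact IsZero.of_epi f h

/-- The class `T_p` is closed under quotients and extensions, i.e. it is a torsion class. -/
theorem Tp_is_torsion_class {C : Type u} [Category.{v} C] [Abelian C]
    [∀ X : C, IsNoetherianObject X] [∀ X : C, IsArtinianObject X]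
    {P : Type*} [LinearOrder P] (φ : C → P)
    (hss : SeeSaw φ) (hiso : IsoInvariant φ)
    (hMDQ : ∀ M : C, ¬ IsZero M → ∃ (N : C) (q : M ⟶ N), IsMDQ φ q)
    (p : P) :
    (∀ ⦃M N : C⦄ (g : M ⟶ N), Epi g → TpMDQ φ p M → TpMDQ φ p N) ∧
    (∀ S : ShortComplex C, S.ShortExact →
      TpMDQ φ p S.X₁ → TpMDQ φ p S.X₃ → TpMDQ φ p S.X₂) := by
  constructor
  · -- closed under quotients
    rintro M N g hg (hM | ⟨M', q, hq, hpq⟩)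
    · exact Or.inl (isZero_of_epi' g hg hM)
    · by_cases hN : IsZero N
      · exact Or.inl hN
      · obtain ⟨N', qN, hqN⟩ := hMDQ N hN
        refine Or.inr ⟨N', qN, hqN, ?_⟩
        haveI := hg; haveI := hqN.1
        have := (hq.2.2.2 (g ≫ qN) inferInstance hqN.2.1).1
        exact le_trans hpq this
  · -- closed under extensions
    intro S hS h1 h3
    by_cases h2 : IsZero S.X₂
    · exact Or.inl h2
    obtain ⟨N, q, hq⟩ := hMDQ S.X₂ h2
    refine Or.inr ⟨N, q, hq, ?_⟩
    haveI := hS.mono_f; haveI := hS.epi_g; haveI := hq.1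
    by_cases h0 : S.f ≫ q = 0
    · -- q factors through X₃
      obtain ⟨q', hq'⟩ := hS.exact.desc' q h0
      have hq'epi : Epi q' := by
        have : Epi (S.g ≫ q') := by rw [hq']; infer_instance
        exact epi_of_epi S.g q'
      have hX3 : ¬ IsZero S.X₃ := fun h => hq.2.1 (isZero_of_epi' q' hq'epi h)
      rcases h3 with h3 | ⟨N₃, q₃, hq₃, hp₃⟩
      · exact absurd h3 hX3
      · have := (hq₃.2.2.2 q' hq'epi hq.2.1).1
        exact le_trans hp₃ this
    · -- the image K of S.f ≫ q is a nonzero subobject of N which is a quotient of X₁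
      set K := Abelian.image (S.f ≫ q) with hK
      set e : S.X₁ ⟶ K := Abelian.factorThruImage (S.f ≫ q)
      set m : K ⟶ N := Abelian.image.ι (S.f ≫ q)
      have hfac : e ≫ m = S.f ≫ q := Abelian.image.fac _
      have hKnz : ¬ IsZero K := by
        intro hz
        apply h0
        rw [← hfac, hz.eq_zero_of_tgt e, zero_comp]
      have hX1 : ¬ IsZero S.X₁ := fun h => hKnz (isZero_of_epi' e inferInstance h)
      rcases h1 with h1 | ⟨N₁, q₁, hq₁, hp₁⟩
      · exact absurd h1 hX1
      have hpK : p ≤ φ K :=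
        le_trans hp₁ (hq₁.2.2.2 e inferInstance hKnz).1
      -- show φ K ≤ φ N using semistability of the MDQ N
      by_cases him : IsIso m
      · rwa [hiso (asIso m)] at hpK
      · -- cokernel of m is a nonzero quotient of N, hence of X₂
        have hcnz : ¬ IsZero (cokernel m) := by
          intro hz
          apply him
          have hπ : cokernel.π m = 0 := hz.eq_zero_of_tgt _
          haveI : Epi m := Abelian.epi_of_cokernel_π_eq_zero m hπ
          exact isIso_of_mono_of_epi m
        have hNc : φ N ≤ φ (cokernel m) := by
          haveI : Epi (q ≫ cokernel.π m) := epi_comp _ _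
          have := (hq.2.2.2 (q ≫ cokernel.π m) inferInstance hcnz).1
          exact this
        have hKN : φ K ≤ φ N := by
          by_contra hlt
          push_neg at hlt
          have hse : (ShortComplex.mk m (cokernel.π m) (cokernel.condition m)).ShortExact :=
            { exact := ShortComplex.exact_cokernel m }
          rcases hss _ hse hKnz hq.2.1 hcnz with ⟨ha, _⟩ | ⟨_, hb⟩ | ⟨ha, _⟩
          · exact absurd ha (not_lt.mpr hlt.le)
          · exact absurd hNc (not_le.mpr ‹φ (cokernel m) < φ N›)
          · exact absurd ha (ne_of_gt hlt)
        exact le_trans hpK hKN
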